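/- Let 𝓛 := span{a(m)b(n) : a,b ∈ 𝔥, m,n ∈ ℤ} ⊆ U(ĥ), let C_∞ := span{½(a(m)b(n) + b(n)a(m)) : a,b ∈ 𝔥, m,n ∈ ℤ, m ≠ 0 and n ≠ 0}, and let 𝓘 := span{L_{a,b}(m,n) : a,b ∈ 𝔥, m,n ∈ ℤ with mn = 0}. Then 𝓛 decomposes as an internal direct sum of vector subspaces: 𝓛 = C_∞ ⊕ 𝓘 ⊕ ℂc. -/

import Mathlib

noncomputable section

variable (V : Type*) [AddCommGroup V] [Module ℂ V]

/-- The underlying space of the Heisenberg Lie algebra `𝔥 ⊗ ℂ[t,t⁻¹] ⊕ ℂ c` attached to a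
vector space `𝔥` with a bilinear form `B`; the element `(f, s)` represents
`∑ₘ (f m)(m) + s·c`, where `a(m)` denotes `a ⊗ tᵐ`. -/
def Heis (B : V →ₗ[ℂ] V →ₗ[ℂ] ℂ) : Type _ := (ℤ →₀ V) × ℂ

variable {V}
variable (B : V →ₗ[ℂ] V →ₗ[ℂ] ℂ)

instance : AddCommGroup (Heis V B) := inferInstanceAs (AddCommGroup ((ℤ →₀ V) × ℂ))
instance : Module ℂ (Heis V B) := inferInstanceAs (Module ℂ ((ℤ →₀ V) × ℂ))

namespace Heis

lemma add_fst (x y : Heis V B) : (x + y).1 = x.1 + y.1 := rfl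
lemma add_snd (x y : Heis V B) : (x + y).2 = x.2 + y.2 := rfl
lemma smul_fst (t : ℂ) (x : Heis V B) : (t • x).1 = t • x.1 := rfl
lemma smul_snd (t : ℂ) (x : Heis V B) : (t • x).2 = t • x.2 := rfl
lemma zero_fst : (0 : Heis V B).1 = 0 := rfl
lemma zero_snd : (0 : Heis V B).2 = 0 := rfl

end Heis

/-- The pairing `∑ₘ m · B (f m) (g (−m))` giving the central term of the bracket. -/
def heisP (f g : ℤ →₀ V) : ℂ := f.sum fun m a => (m : ℂ) * B a (g (-m))

lemma heisP_zero_left (g : ℤ →₀ V) : heisP B 0 g = 0 := Finsupp.sum_zero_index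

lemma heisP_zero_right (f : ℤ →₀ V) : heisP B f 0 = 0 := by
  simp [heisP]

lemma heisP_add_left (f f' g : ℤ →₀ V) :
    heisP B (f + f') g = heisP B f g + heisP B f' g := by
  unfold heisP
  refine Finsupp.sum_add_index' (fun m => by simp) (fun m a a' => by simp [mul_add])

lemma heisP_add_right (f g g' : ℤ →₀ V) :
    heisP B f (g + g') = heisP B f g + heisP B f g' := by
  unfold heisP
  rw [← Finsupp.sum_add]
  exact Finsupp.sum_congr fun m _ => by simp [mul_add]

lemma heisP_smul_left (t : ℂ) (f g : ℤ →₀ V) : heisP B (t • f) g = t * heisP B f g := by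
  unfold heisP
  rw [Finsupp.sum_smul_index' (fun m => by simp), Finsupp.sum, Finsupp.sum, Finset.mul_sum]
  refine Finset.sum_congr rfl fun m _ => ?_
  simp only [map_smul, LinearMap.smul_apply, smul_eq_mul]
  ring

lemma heisP_smul_right (t : ℂ) (f g : ℤ →₀ V) : heisP B f (t • g) = t * heisP B f g := by
  unfold heisP
  rw [Finsupp.sum, Finsupp.sum, Finset.mul_sum]
  refine Finset.sum_congr rfl fun m _ => ?_
  simp only [Finsupp.smul_apply, map_smul, smul_eq_mul]
  ring

instance : LieRing (Heis V B) where
  bracket x y := (0, (heisP B x.1 y.1 - heisP B y.1 x.1) / 2)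
  add_lie x y z := by
    refine Prod.ext ?_ ?_
    · exact (zero_add (0 : ℤ →₀ V)).symm
    · show (heisP B (x + y).1 z.1 - heisP B z.1 (x + y).1) / 2 =
        (heisP B x.1 z.1 - heisP B z.1 x.1) / 2 + (heisP B y.1 z.1 - heisP B z.1 y.1) / 2
      rw [Heis.add_fst, heisP_add_left, heisP_add_right]
      ring
  lie_add x y z := by
    refine Prod.ext ?_ ?_
    · exact (zero_add (0 : ℤ →₀ V)).symm
    · show (heisP B x.1 (y + z).1 - heisP B (y + z).1 x.1) / 2 =
        (heisP B x.1 y.1 - heisP B y.1 x.1) / 2 + (heisP B x.1 z.1 - heisP B z.1 x.1) / 2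
      rw [Heis.add_fst, heisP_add_left, heisP_add_right]
      ring
  lie_self x := by
    refine Prod.ext rfl ?_
    show (heisP B x.1 x.1 - heisP B x.1 x.1) / 2 = (0 : Heis V B).2
    rw [Heis.zero_snd]
    ring
  leibniz_lie x y z := by
    refine Prod.ext ?_ ?_
    · exact (zero_add (0 : ℤ →₀ V)).symm
    · show (heisP B x.1 (0 : ℤ →₀ V) - heisP B (0 : ℤ →₀ V) x.1) / 2 =
        (heisP B (0 : ℤ →₀ V) z.1 - heisP B z.1 (0 : ℤ →₀ V)) / 2 +
        (heisP B y.1 (0 : ℤ →₀ V) - heisP B (0 : ℤ →₀ V) y.1) / 2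
      rw [heisP_zero_left, heisP_zero_right, heisP_zero_left, heisP_zero_right,
        heisP_zero_left, heisP_zero_right]
      ring

instance : LieAlgebra ℂ (Heis V B) where
  lie_smul t x y := by
    refine Prod.ext ?_ ?_
    · exact (smul_zero t).symm
    · show (heisP B x.1 (t • y).1 - heisP B (t • y).1 x.1) / 2 =
        t • ((heisP B x.1 y.1 - heisP B y.1 x.1) / 2)
      rw [Heis.smul_fst, heisP_smul_left, heisP_smul_right, smul_eq_mul]
      ring

/-- `a(m) = a ⊗ tᵐ` as an element of the Heisenberg Lie algebra. -/
def Heis.gen (a : V) (m : ℤ) : Heis V B := (Finsupp.single m a, 0)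

/-- The central element `c` of the Heisenberg Lie algebra. -/
def Heis.cen : Heis V B := (0, 1)


/-- `U(ĥ)`, the universal enveloping algebra of the Heisenberg Lie algebra. -/
abbrev UHeis : Type _ := UniversalEnvelopingAlgebra ℂ (Heis V B)

/-- The image of `a(m)` in `U(ĥ)`. -/
def genU (a : V) (m : ℤ) : UHeis B := UniversalEnvelopingAlgebra.ι ℂ (Heis.gen B a m)

/-- The image of `c` in `U(ĥ)`. -/
def cenU : UHeis B := UniversalEnvelopingAlgebra.ι ℂ (Heis.cen B)

/-- The normal ordering `:a(m)b(n):` in `U(ĥ)`. -/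
def no (a b : V) (m n : ℤ) : UHeis B :=
  if n ≤ m then genU B b n * genU B a m else genU B a m * genU B b n

/-- `L_{a,b}(m,n) := ½ :a(m)b(n):`. -/
def LU (a b : V) (m n : ℤ) : UHeis B := (2⁻¹ : ℂ) • no B a b m n

/-- `𝓛 = span{a(m)b(n) : a,b ∈ 𝔥, m,n ∈ ℤ} ⊆ U(ĥ)`. -/
def spanL : Submodule ℂ (UHeis B) :=
  Submodule.span ℂ {x : UHeis B | ∃ a b : V, ∃ m n : ℤ, x = genU B a m * genU B b n}

/-- `C_∞ = span{½(a(m)b(n) + b(n)a(m)) : a,b ∈ 𝔥, m,n ∈ ℤ, m ≠ 0, n ≠ 0}`. -/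
def spanCinf : Submodule ℂ (UHeis B) :=
  Submodule.span ℂ {x : UHeis B | ∃ a b : V, ∃ m n : ℤ, m ≠ 0 ∧ n ≠ 0 ∧
    x = (2⁻¹ : ℂ) • (genU B a m * genU B b n + genU B b n * genU B a m)}

/-- `𝓘 = span{L_{a,b}(m,n) : a,b ∈ 𝔥, m,n ∈ ℤ, mn = 0}`. -/
def spanI : Submodule ℂ (UHeis B) :=
  Submodule.span ℂ {x : UHeis B | ∃ a b : V, ∃ m n : ℤ, m * n = 0 ∧ x = LU B a b m n}

namespace HeisAux

lemma pair_eq {α : Type*} {a b c d : α}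
    (h : Finsupp.single a 1 + Finsupp.single b 1 = Finsupp.single c 1 + Finsupp.single d 1) :
    (a = c ∧ b = d) ∨ (a = d ∧ b = c) := by
  classical
  have hm := congrArg Finsupp.toMultiset h
  rw [map_add, map_add, Finsupp.toMultiset_single, Finsupp.toMultiset_single,
    Finsupp.toMultiset_single, Finsupp.toMultiset_single, one_smul, one_smul, one_smul, one_smul,
    Multiset.singleton_add, Multiset.singleton_add] at hm
  rcases Multiset.cons_eq_cons.mp hm with ⟨h1, h2⟩ | ⟨_, cs, h3, h4⟩
  · exact Or.inl ⟨h1, Multiset.singleton_inj.mp h2⟩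
  · have hcs : cs = 0 := by
      have hcard := congrArg Multiset.card h3
      rw [Multiset.card_singleton, Multiset.card_cons] at hcard
      exact Multiset.card_eq_zero.mp (by omega)
    subst hcs
    rw [Multiset.cons_zero] at h3 h4
    exact Or.inr ⟨(Multiset.singleton_inj.mp h4).symm, Multiset.singleton_inj.mp h3⟩

open MvPolynomial in
lemma pderiv_comm {σ R : Type*} [CommSemiring R] (i j : σ) (p : MvPolynomial σ R) :
    pderiv i (pderiv j p) = pderiv j (pderiv i p) := by
  classical
  induction p using MvPolynomial.induction_on' with
  | add p q hp hq => simp [hp, hq]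
  | monomial s a =>
    simp only [pderiv_monomial]
    rw [tsub_tsub, tsub_tsub, add_comm]
    rcases eq_or_ne i j with rfl | hij
    · rfl
    · congr 1
      rw [Finsupp.tsub_apply, Finsupp.tsub_apply, Finsupp.single_apply, Finsupp.single_apply,
        if_neg hij, if_neg (Ne.symm hij)]
      simp only [Nat.sub_zero]
      ring

end HeisAux

section Aux1

variable {V : Type*} [AddCommGroup V] [Module ℂ V] (B : V →ₗ[ℂ] V →ₗ[ℂ] ℂ)

attribute [local instance] LieRing.ofAssociativeRing

lemma Heis.lie_def (x y : Heis V B) :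
    ⁅x, y⁆ = ((0 : ℤ →₀ V), (heisP B x.1 y.1 - heisP B y.1 x.1) / 2) := rfl

/-- helper: sum over a Finsupp of an `if =` summand -/
lemma heisP_sum_ite (f : ℤ →₀ V) (n : ℤ) (h : V →ₗ[ℂ] ℂ) :
    (f.sum fun m a => if m = n then h a else 0) = h (f n) := by
  classical
  rw [Finsupp.sum]
  rw [Finset.sum_eq_single n (fun m _ hm => if_neg hm) (fun hn => ?_)]
  · rw [if_pos rfl]
  · rw [Finsupp.notMem_support_iff.mp hn, map_zero, if_pos rfl]

lemma heisP_single_left (m : ℤ) (a : V) (g : ℤ →₀ V) :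
    heisP B (Finsupp.single m a) g = (m : ℂ) * B a (g (-m)) := by
  unfold heisP
  rw [Finsupp.sum_single_index (by simp)]

lemma heisP_single_right (f : ℤ →₀ V) (n : ℤ) (b : V) :
    heisP B f (Finsupp.single n b) = ((-n : ℤ) : ℂ) * B (f (-n)) b := by
  classical
  unfold heisP
  have hrw : (f.sum fun m a => (m : ℂ) * B a ((Finsupp.single n b) (-m))) =
      f.sum fun m a => if m = -n then (((-n : ℤ) : ℂ) • ((B.flip b) : V →ₗ[ℂ] ℂ)) a else 0 := by
    apply Finsupp.sum_congr
    intro m _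
    rw [Finsupp.single_apply]
    rcases eq_or_ne m (-n) with rfl | hm
    · rw [if_pos (by omega), if_pos rfl]
      simp [mul_comm]
    · rw [if_neg (by omega), if_neg hm, map_zero, mul_zero]
  rw [hrw, heisP_sum_ite f (-n) _]
  simp [mul_comm]

lemma heisP_single_single (m n : ℤ) (a b : V) :
    heisP B (Finsupp.single m a) (Finsupp.single n b) =
      if n = -m then (m : ℂ) * B a b else 0 := by
  classical
  rw [heisP_single_left, Finsupp.single_apply]
  rcases eq_or_ne n (-m) with rfl | hn
  · rw [if_pos rfl, if_pos rfl]
  · rw [if_neg hn, if_neg hn, map_zero, mul_zero]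

/-- `a ↦ a(m)` as a linear map into `U(ĥ)`. -/
def genL (m : ℤ) : V →ₗ[ℂ] UHeis B :=
  (UniversalEnvelopingAlgebra.ι ℂ (L := Heis V B)).toLinearMap.comp
    (((LinearMap.inl ℂ (ℤ →₀ V) ℂ).comp (Finsupp.lsingle m)) : V →ₗ[ℂ] Heis V B)

lemma genL_apply (m : ℤ) (a : V) : genL B m a = genU B a m := rfl

/-- commutator of two generators in `U(ĥ)` (assuming symmetry of `B`). -/
lemma genU_mul_comm (hsym : ∀ x y, B x y = B y x) (a b : V) (m n : ℤ) :
    genU B a m * genU B b n =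
      genU B b n * genU B a m + (if n = -m then (m : ℂ) * B a b else 0) • cenU B := by
  classical
  have h2 : (⁅Heis.gen B a m, Heis.gen B b n⁆ : Heis V B) =
      (if n = -m then (m : ℂ) * B a b else 0) • Heis.cen B := by
    rw [Heis.lie_def]
    refine Prod.ext ?_ ?_
    · show (0 : ℤ →₀ V) = _ • (0 : ℤ →₀ V); rw [smul_zero]
    · show (heisP B (Finsupp.single m a) (Finsupp.single n b) -
          heisP B (Finsupp.single n b) (Finsupp.single m a)) / 2 = _ • (1 : ℂ)
      rw [heisP_single_single, heisP_single_single, smul_eq_mul, mul_one]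
      rcases eq_or_ne n (-m) with rfl | hn
      · rw [if_pos rfl, if_pos (by omega), hsym b a]
        push_cast
        ring
      · rw [if_neg hn, if_neg (by omega)]
        norm_num
  have hlie : (⁅genU B a m, genU B b n⁆ : UHeis B) =
      (if n = -m then (m : ℂ) * B a b else 0) • cenU B := by
    rw [show (⁅genU B a m, genU B b n⁆ : UHeis B) =
        UniversalEnvelopingAlgebra.ι ℂ ⁅Heis.gen B a m, Heis.gen B b n⁆ from
        (LieHom.map_lie (UniversalEnvelopingAlgebra.ι ℂ) _ _).symm, h2, map_smul]
    rfl
  rw [Ring.lie_def] at hlie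
  rw [← hlie]
  abel

end Aux1
section Aux2

open MvPolynomial

variable {V : Type*} [AddCommGroup V] [Module ℂ V] [FiniteDimensional ℂ V]
variable (B : V →ₗ[ℂ] V →ₗ[ℂ] ℂ)

/-- variable index type: `none` is the central variable `ℏ`. -/
abbrev σH (V : Type*) [AddCommGroup V] [Module ℂ V] :=
  Option (ℤ × Fin (Module.finrank ℂ V))

/-- the polynomial ring on which the Heisenberg algebra acts. -/
abbrev MH (V : Type*) [AddCommGroup V] [Module ℂ V] := MvPolynomial (σH V) ℂ

/-- the chosen basis of `V`. -/
noncomputable def bH (V : Type*) [AddCommGroup V] [Module ℂ V] [FiniteDimensional ℂ V] :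
    Module.Basis (Fin (Module.finrank ℂ V)) ℂ V := Module.finBasis ℂ V

/-- the central variable. -/
noncomputable def Xh (V : Type*) [AddCommGroup V] [Module ℂ V] : MH V := X none

/-- multiplication part of the action: `f ↦ ∑ m,i (repr (f m))_i X_{m,i}`. -/
noncomputable def lmapH : (ℤ →₀ V) →ₗ[ℂ] MH V :=
  Finsupp.lsum ℂ fun m => ∑ i, ((bH V).coord i).smulRight (X (some (m, i)))

/-- derivation part of the action. -/
noncomputable def DopH : (ℤ →₀ V) →ₗ[ℂ] (MH V →ₗ[ℂ] MH V) :=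
  Finsupp.lsum ℂ fun m => ∑ i,
    (((m : ℂ) / 2) • (B.flip ((bH V) i))).smulRight (pderiv (some (-m, i))).toLinearMap

lemma lmapH_single (m : ℤ) (a : V) :
    lmapH (Finsupp.single m a) = ∑ i, (bH V).repr a i • X (some (m, i)) := by
  rw [lmapH, Finsupp.lsum_single, LinearMap.sum_apply]
  simp [LinearMap.smulRight_apply, Module.Basis.coord_apply]

lemma DopH_single (m : ℤ) (a : V) :
    DopH B (Finsupp.single m a) =
      ∑ i, ((m : ℂ) / 2 * B a ((bH V) i)) • (pderiv (some (-m, i))).toLinearMap := by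
  rw [DopH, Finsupp.lsum_single, LinearMap.sum_apply]
  apply Finset.sum_congr rfl
  intro i _
  ext p
  simp [LinearMap.smul_apply, LinearMap.flip_apply, smul_smul, mul_comm, mul_assoc, mul_left_comm]

lemma DopH_leibniz (f : ℤ →₀ V) (p q : MH V) :
    DopH B f (p * q) = p * DopH B f q + q * DopH B f p := by
  induction f using Finsupp.induction_linear with
  | zero => simp
  | add f g hf hg =>
    rw [map_add, LinearMap.add_apply, LinearMap.add_apply, LinearMap.add_apply, hf, hg]
    ring
  | single m a =>
    rw [DopH_single]
    simp only [LinearMap.sum_apply, LinearMap.smul_apply, Derivation.coeFn_coe]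
    rw [Finset.mul_sum, Finset.mul_sum, ← Finset.sum_add_distrib]
    apply Finset.sum_congr rfl
    intro i _
    rw [pderiv_mul, smul_add]
    simp only [MvPolynomial.smul_eq_C_mul]
    ring

lemma DopH_one (f : ℤ →₀ V) : DopH B f 1 = 0 := by
  have := DopH_leibniz B f 1 1
  simpa using this

lemma DopH_Xh (f : ℤ →₀ V) : DopH B f (Xh V) = 0 := by
  induction f using Finsupp.induction_linear with
  | zero => simp
  | add f g hf hg => rw [map_add, LinearMap.add_apply, hf, hg, add_zero]
  | single m a =>
    rw [DopH_single]
    simp only [LinearMap.sum_apply, LinearMap.smul_apply, Derivation.coeFn_coe, Xh]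
    apply Finset.sum_eq_zero
    intro i _
    rw [pderiv_X_of_ne (by simp), smul_zero]

lemma DopH_comm (f g : ℤ →₀ V) (p : MH V) :
    DopH B f (DopH B g p) = DopH B g (DopH B f p) := by
  induction f using Finsupp.induction_linear with
  | zero => simp
  | add f f' hf hf' =>
    rw [map_add, LinearMap.add_apply, LinearMap.add_apply, hf, hf', ← map_add]
  | single m a =>
    induction g using Finsupp.induction_linear with
    | zero => simp
    | add g g' hg hg' =>
      rw [map_add, LinearMap.add_apply, LinearMap.add_apply, map_add, hg, hg']
    | single n b =>
      rw [DopH_single, DopH_single]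
      simp only [LinearMap.sum_apply, LinearMap.smul_apply, Derivation.coeFn_coe, map_sum,
        map_smul]
      simp only [Finset.smul_sum, smul_smul]
      rw [Finset.sum_comm]
      apply Finset.sum_congr rfl; intro i _
      apply Finset.sum_congr rfl; intro j _
      rw [HeisAux.pderiv_comm, mul_comm]

lemma DopH_X (f : ℤ →₀ V) (n : ℤ) (j : Fin (Module.finrank ℂ V)) :
    DopH B f (X (some (n, j))) = (((-n : ℤ) : ℂ) / 2 * B (f (-n)) ((bH V) j)) • 1 := by
  classical
  induction f using Finsupp.induction_linear with
  | zero => simp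
  | add f g hf hg =>
    rw [map_add, LinearMap.add_apply, hf, hg, ← add_smul, Finsupp.add_apply, map_add,
      LinearMap.add_apply, mul_add]
  | single m a =>
    rw [DopH_single]
    simp only [LinearMap.sum_apply, LinearMap.smul_apply, Derivation.coeFn_coe]
    rcases eq_or_ne m (-n) with rfl | hm
    · simp only [neg_neg]
      rw [Finset.sum_eq_single j ?h1 ?h2]
      · rw [pderiv_X_self, Finsupp.single_apply, if_pos rfl]
        try norm_num
      case h1 =>
        intro i _ hij
        have hne : (some (n, j) : σH V) ≠ some (n, i) := by
          intro hcontra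
          exact hij (congrArg Prod.snd (Option.some.inj hcontra)).symm
        rw [pderiv_X_of_ne hne, smul_zero]
      case h2 => intro hj; exact absurd (Finset.mem_univ j) hj
    · rw [Finset.sum_eq_zero, Finsupp.single_apply, if_neg hm, map_zero, LinearMap.zero_apply,
        mul_zero, zero_smul]
      intro i _
      have hne : (some (n, j) : σH V) ≠ some (-m, i) := by
        intro hcontra
        exact hm (by have := congrArg Prod.fst (Option.some.inj hcontra); omega)
      rw [pderiv_X_of_ne hne, smul_zero]

lemma DopH_lmapH (f g : ℤ →₀ V) :
    DopH B f (lmapH g) = (heisP B f g / 2) • 1 := by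
  induction g using Finsupp.induction_linear with
  | zero => simp [heisP_zero_right]
  | add g g' hg hg' =>
    rw [map_add, map_add, hg, hg', heisP_add_right, ← add_smul, add_div]
  | single n b =>
    rw [lmapH_single, map_sum]
    simp only [map_smul]
    rw [heisP_single_right]
    have hb : ∑ i, (bH V).repr b i * B (f (-n)) ((bH V) i) = B (f (-n)) b := by
      conv_rhs => rw [← (bH V).sum_repr b]
      rw [map_sum]
      simp [mul_comm]
    have : ∀ i ∈ Finset.univ, (bH V).repr b i • DopH B f (X (some (n, i)) : MH V) =
        (((-n : ℤ) : ℂ) / 2 * ((bH V).repr b i * B (f (-n)) ((bH V) i))) • (1 : MH V) := by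
      intro i _
      rw [DopH_X, smul_smul]
      ring_nf
    rw [Finset.sum_congr rfl this, ← Finset.sum_smul, ← Finset.mul_sum, hb]
    congr 1
    push_cast
    ring

end Aux2
section Aux3

open MvPolynomial

attribute [local instance] LieRing.ofAssociativeRing

variable {V : Type*} [AddCommGroup V] [Module ℂ V] [FiniteDimensional ℂ V]
variable (B : V →ₗ[ℂ] V →ₗ[ℂ] ℂ)

/-- the action of the Heisenberg algebra on `MH V`, as a linear map. -/
noncomputable def rhoL : Heis V B →ₗ[ℂ] Module.End ℂ (MH V) where
  toFun x := LinearMap.mulLeft ℂ (lmapH x.1 + x.2 • Xh V) +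
    (LinearMap.mulLeft ℂ (Xh V)) ∘ₗ DopH B x.1
  map_add' x y := by
    refine LinearMap.ext fun p => ?_
    simp only [LinearMap.add_apply, LinearMap.mulLeft_apply, LinearMap.comp_apply,
      Heis.add_fst B x y, Heis.add_snd B x y, map_add, LinearMap.add_apply]
    simp only [MvPolynomial.smul_eq_C_mul, map_add]
    ring
  map_smul' t x := by
    refine LinearMap.ext fun p => ?_
    simp only [RingHom.id_apply, LinearMap.smul_apply, LinearMap.add_apply,
      LinearMap.mulLeft_apply, LinearMap.comp_apply, Heis.smul_fst B t x, Heis.smul_snd B t x,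
      map_smul, LinearMap.smul_apply]
    simp only [MvPolynomial.smul_eq_C_mul, smul_eq_mul, map_mul]
    ring

lemma rhoL_apply (x : Heis V B) (p : MH V) :
    rhoL B x p = (lmapH x.1 + x.2 • Xh V) * p + Xh V * DopH B x.1 p := rfl

/-- the action as a morphism of Lie algebras. -/
noncomputable def rhoH : Heis V B →ₗ⁅ℂ⁆ Module.End ℂ (MH V) :=
  { rhoL B with
    map_lie' := by
      intro x y
      refine LinearMap.ext fun p => ?_
      have hxy : (⁅x, y⁆ : Heis V B) =
          ((0 : ℤ →₀ V), (heisP B x.1 y.1 - heisP B y.1 x.1) / 2) := Heis.lie_def B x y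
      rw [Ring.lie_def]
      show rhoL B ⁅x,y⁆ p = (rhoL B x * rhoL B y) p - (rhoL B y * rhoL B x) p
      rw [Module.End.mul_apply, Module.End.mul_apply, rhoL_apply, rhoL_apply, rhoL_apply,
        rhoL_apply, rhoL_apply, hxy]
      simp only [map_zero, LinearMap.zero_apply, zero_add, mul_zero, add_zero]
      have h1 : DopH B x.1 (y.2 • Xh V) = 0 := by rw [map_smul, DopH_Xh, smul_zero]
      have h2 : DopH B y.1 (x.2 • Xh V) = 0 := by rw [map_smul, DopH_Xh, smul_zero]
      rw [map_add, map_add, DopH_leibniz, DopH_leibniz, DopH_leibniz, DopH_leibniz,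
        map_add, map_add, DopH_lmapH, DopH_lmapH, h1, h2, DopH_Xh, DopH_Xh,
        DopH_comm B x.1 y.1 p]
      simp only [add_zero, mul_zero, zero_mul]
      simp only [MvPolynomial.smul_eq_C_mul, div_eq_mul_inv, map_mul, map_sub, map_add,
        map_neg, map_one]
      ring
    }

lemma rhoH_apply (x : Heis V B) (p : MH V) :
    rhoH B x p = (lmapH x.1 + x.2 • Xh V) * p + Xh V * DopH B x.1 p := rfl

/-- the "vacuum evaluation" linear map `U(ĥ) → MH V`. -/
noncomputable def PhiL : UHeis B →ₗ[ℂ] MH V :=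
  (LinearMap.applyₗ (1 : MH V)).comp (UniversalEnvelopingAlgebra.lift ℂ (rhoH B)).toLinearMap

lemma PhiL_apply (u : UHeis B) :
    PhiL B u = UniversalEnvelopingAlgebra.lift ℂ (rhoH B) u 1 := rfl

lemma PhiL_cenU : PhiL B (cenU B) = Xh V := by
  rw [PhiL_apply, cenU, UniversalEnvelopingAlgebra.lift_ι_apply, rhoH_apply]
  show (lmapH (0 : ℤ →₀ V) + (1 : ℂ) • Xh V) * 1 + Xh V * DopH B (0 : ℤ →₀ V) 1 = Xh V
  rw [map_zero, map_zero, LinearMap.zero_apply, mul_zero, add_zero, zero_add, one_smul, mul_one]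

lemma PhiL_gen_mul (a b : V) (m n : ℤ) :
    PhiL B (genU B a m * genU B b n) =
      lmapH (Finsupp.single m a) * lmapH (Finsupp.single n b) +
        ((if n = -m then (m : ℂ) * B a b else 0) / 2) • Xh V := by
  rw [PhiL_apply, map_mul, Module.End.mul_apply, genU, genU,
    UniversalEnvelopingAlgebra.lift_ι_apply, UniversalEnvelopingAlgebra.lift_ι_apply,
    rhoH_apply, rhoH_apply]
  show _ = _
  have e1 : (lmapH (Heis.gen B b n).1 + (Heis.gen B b n).2 • Xh V) * 1 +
      Xh V * DopH B (Heis.gen B b n).1 1 = lmapH (Finsupp.single n b) := by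
    show (lmapH (Finsupp.single n b) + (0:ℂ) • Xh V) * 1 + Xh V * DopH B (Finsupp.single n b) 1 = _
    rw [DopH_one, mul_zero, add_zero, zero_smul, add_zero, mul_one]
  rw [e1]
  show (lmapH (Finsupp.single m a) + (0:ℂ) • Xh V) * lmapH (Finsupp.single n b) +
      Xh V * DopH B (Finsupp.single m a) (lmapH (Finsupp.single n b)) = _
  rw [zero_smul, add_zero, DopH_lmapH, heisP_single_single]
  rw [mul_smul_comm, mul_one]

end Aux3
section Aux4

open MvPolynomial

variable {V : Type*} [AddCommGroup V] [Module ℂ V] [FiniteDimensional ℂ V]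
variable (B : V →ₗ[ℂ] V →ₗ[ℂ] ℂ)

/-- generator attached to a variable index. -/
noncomputable def gU (s : ℤ × Fin (Module.finrank ℂ V)) : UHeis B := genU B ((bH V) s.2) s.1

/-- symmetrized product of two generators. -/
noncomputable def symU (s t : ℤ × Fin (Module.finrank ℂ V)) : UHeis B :=
  (2⁻¹ : ℂ) • (gU B s * gU B t + gU B t * gU B s)

lemma symU_comm (s t : ℤ × Fin (Module.finrank ℂ V)) : symU B s t = symU B t s := by
  rw [symU, symU, add_comm]

open Classical in
/-- value of `Ψ` on a monomial. -/
noncomputable def uD (d : σH V →₀ ℕ) : UHeis B :=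
  if h : ∃ p : (ℤ × Fin (Module.finrank ℂ V)) × (ℤ × Fin (Module.finrank ℂ V)),
      d = Finsupp.single (some p.1) 1 + Finsupp.single (some p.2) 1
  then symU B h.choose.1 h.choose.2 else 0

lemma uD_pair (s t : ℤ × Fin (Module.finrank ℂ V)) :
    uD B (Finsupp.single (some s) 1 + Finsupp.single (some t) 1) = symU B s t := by
  have h : ∃ p : (ℤ × Fin (Module.finrank ℂ V)) × (ℤ × Fin (Module.finrank ℂ V)),
      (Finsupp.single (some s) 1 + Finsupp.single (some t) 1 : σH V →₀ ℕ) =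
        Finsupp.single (some p.1) 1 + Finsupp.single (some p.2) 1 := ⟨(s, t), rfl⟩
  classical
  rw [uD, dif_pos h]
  rcases HeisAux.pair_eq h.choose_spec.symm with ⟨h1, h2⟩ | ⟨h1, h2⟩
  · rw [Option.some.inj h1, Option.some.inj h2]
  · rw [Option.some.inj h1, Option.some.inj h2, symU_comm]

/-- the left inverse of `Φ` on degree-two symmetric elements. -/
noncomputable def PsiU : MH V →ₗ[ℂ] UHeis B :=
  (Finsupp.lsum ℂ fun d => LinearMap.toSpanSingleton ℂ (UHeis B) (uD B d)) ∘ₗ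
    (AddMonoidAlgebra.coeffLinearEquiv ℂ).toLinearMap

lemma PsiU_monomial (d : σH V →₀ ℕ) (c : ℂ) : PsiU B (monomial d c) = c • uD B d := by
  rw [← MvPolynomial.single_eq_monomial]
  exact Finsupp.lsum_single ℂ (fun d => LinearMap.toSpanSingleton ℂ (UHeis B) (uD B d)) d c

lemma X_mul_X (s t : σH V) :
    (X s : MH V) * X t = monomial (Finsupp.single s 1 + Finsupp.single t 1) 1 := by
  rw [MvPolynomial.X, MvPolynomial.X, monomial_mul, one_mul]

lemma genU_expand (a : V) (m : ℤ) :
    genU B a m = ∑ i, (bH V).repr a i • gU B (m, i) := by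
  rw [← genL_apply]
  conv_lhs => rw [← (bH V).sum_repr a]
  rw [map_sum]
  apply Finset.sum_congr rfl
  intro i _
  rw [map_smul, genL_apply]
  rfl

lemma PsiU_LL (a b : V) (m n : ℤ) :
    PsiU B (lmapH (Finsupp.single m a) * lmapH (Finsupp.single n b)) =
      (2⁻¹ : ℂ) • (genU B a m * genU B b n + genU B b n * genU B a m) := by
  rw [lmapH_single, lmapH_single, Finset.sum_mul_sum, map_sum]
  have hterm : ∀ i ∈ Finset.univ, (PsiU B (∑ j, ((bH V).repr a i • X (some (m, i)) : MH V) *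
      ((bH V).repr b j • X (some (n, j))))) =
      ∑ j, ((bH V).repr a i * (bH V).repr b j) • symU B (m, i) (n, j) := by
    intro i _
    rw [map_sum]
    apply Finset.sum_congr rfl
    intro j _
    rw [smul_mul_smul_comm, X_mul_X, map_smul, PsiU_monomial, one_smul, uD_pair]
  rw [Finset.sum_congr rfl hterm]
  have e1 : (∑ i, (bH V).repr a i • gU B (m, i)) * (∑ j, (bH V).repr b j • gU B (n, j)) =
      ∑ i, ∑ j, ((bH V).repr a i * (bH V).repr b j) • (gU B (m, i) * gU B (n, j)) := by
    rw [Finset.sum_mul_sum]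
    exact Finset.sum_congr rfl fun i _ => Finset.sum_congr rfl fun j _ => smul_mul_smul_comm _ _ _ _
  have e2 : (∑ j, (bH V).repr b j • gU B (n, j)) * (∑ i, (bH V).repr a i • gU B (m, i)) =
      ∑ i, ∑ j, ((bH V).repr a i * (bH V).repr b j) • (gU B (n, j) * gU B (m, i)) := by
    rw [Finset.sum_mul_sum, Finset.sum_comm]
    refine Finset.sum_congr rfl fun i _ => Finset.sum_congr rfl fun j _ => ?_
    rw [smul_mul_smul_comm, mul_comm ((bH V).repr b j)]
  rw [genU_expand B a m, genU_expand B b n, e1, e2, ← Finset.sum_add_distrib, Finset.smul_sum]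
  refine Finset.sum_congr rfl fun i _ => ?_
  rw [← Finset.sum_add_distrib, Finset.smul_sum]
  refine Finset.sum_congr rfl fun j _ => ?_
  rw [← smul_add, smul_comm ((2:ℂ)⁻¹), symU]

end Aux4
namespace HeisAux

lemma disjoint_of_sep {U M₂ : Type*} [AddCommGroup U] [Module ℂ U] [AddCommGroup M₂]
    [Module ℂ M₂] (Φ : U →ₗ[ℂ] M₂) (Ψ : M₂ →ₗ[ℂ] U) (P Q : Submodule ℂ U)
    (N N' : Submodule ℂ M₂) (hP : P.map Φ ≤ N) (hQ : Q.map Φ ≤ N') (hNN : Disjoint N N')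
    (hΨ : ∀ x ∈ P, Ψ (Φ x) = x) : Disjoint P Q := by
  rw [Submodule.disjoint_def]
  intro x hxP hxQ
  have h0 : Φ x = 0 :=
    Submodule.disjoint_def.mp hNN _ (hP ⟨x, hxP, rfl⟩) (hQ ⟨x, hxQ, rfl⟩)
  rw [← hΨ x hxP, h0, map_zero]


lemma supported_union {M : Type*} (s t : Set M) :
    AddMonoidAlgebra.supported ℂ ℂ (s ∪ t) =
      AddMonoidAlgebra.supported ℂ ℂ s ⊔ AddMonoidAlgebra.supported ℂ ℂ t := by
  simp only [AddMonoidAlgebra.supported, Finsupp.supported_union,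
    Submodule.comap_equiv_eq_map_symm, Submodule.map_sup]

lemma disjoint_supported_supported {M : Type*} {s t : Set M} (h : Disjoint s t) :
    Disjoint (AddMonoidAlgebra.supported ℂ ℂ s) (AddMonoidAlgebra.supported ℂ ℂ t) := by
  rw [Submodule.disjoint_def]
  intro x hs ht
  have := Submodule.disjoint_def.mp (Finsupp.disjoint_supported_supported (M := ℂ) (R := ℂ) h)
    (AddMonoidAlgebra.coeffLinearEquiv ℂ x) hs ht
  exact (AddMonoidAlgebra.coeffLinearEquiv ℂ).injective (this.trans (map_zero _).symm)

end HeisAux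

section Aux5

open MvPolynomial

variable {V : Type*} [AddCommGroup V] [Module ℂ V] [FiniteDimensional ℂ V]
variable (B : V →ₗ[ℂ] V →ₗ[ℂ] ℂ)

/-- monomials with both indices nonzero. -/
def T1 (V : Type*) [AddCommGroup V] [Module ℂ V] : Set (σH V →₀ ℕ) :=
  {d | ∃ s t : ℤ × Fin (Module.finrank ℂ V), s.1 ≠ 0 ∧ t.1 ≠ 0 ∧
    d = Finsupp.single (some s) 1 + Finsupp.single (some t) 1}

/-- monomials with some index zero. -/
def T2 (V : Type*) [AddCommGroup V] [Module ℂ V] : Set (σH V →₀ ℕ) :=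
  {d | ∃ s t : ℤ × Fin (Module.finrank ℂ V), s.1 * t.1 = 0 ∧
    d = Finsupp.single (some s) 1 + Finsupp.single (some t) 1}

/-- the `ℏ` monomial. -/
def T3 (V : Type*) [AddCommGroup V] [Module ℂ V] : Set (σH V →₀ ℕ) :=
  {Finsupp.single (none : σH V) 1}

lemma not_mem_T3 (s t : ℤ × Fin (Module.finrank ℂ V)) :
    (Finsupp.single (some s) 1 + Finsupp.single (some t) 1 : σH V →₀ ℕ) ∉ T3 V := by
  intro hmem
  have := DFunLike.congr_fun (Set.mem_singleton_iff.mp hmem) (none : σH V)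
  simp [Finsupp.single_apply] at this

lemma disjT12 : Disjoint (T1 V) (T2 V) := by
  rw [Set.disjoint_left]
  rintro d ⟨s, t, hs, ht, rfl⟩ ⟨s', t', hst, heq⟩
  rcases HeisAux.pair_eq heq with ⟨h1, h2⟩ | ⟨h1, h2⟩ <;>
    [(rw [← Option.some.inj h1, ← Option.some.inj h2] at hst);
     (rw [← Option.some.inj h1, ← Option.some.inj h2] at hst)]
  · exact (mul_ne_zero hs ht) hst
  · exact (mul_ne_zero ht hs) hst

lemma disjT13 : Disjoint (T1 V) (T3 V) := by
  rw [Set.disjoint_left]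
  rintro d ⟨s, t, _, _, rfl⟩ hmem
  exact not_mem_T3 s t hmem

lemma disjT23 : Disjoint (T2 V) (T3 V) := by
  rw [Set.disjoint_left]
  rintro d ⟨s, t, _, rfl⟩ hmem
  exact not_mem_T3 s t hmem

lemma LL_mem (a b : V) (m n : ℤ) (T : Set (σH V →₀ ℕ))
    (hT : ∀ i j, (Finsupp.single (some (m, i)) 1 + Finsupp.single (some (n, j)) 1) ∈ T) :
    lmapH (Finsupp.single m a) * lmapH (Finsupp.single n b) ∈ AddMonoidAlgebra.supported ℂ ℂ T := by
  rw [lmapH_single, lmapH_single, Finset.sum_mul_sum]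
  apply Submodule.sum_mem
  intro i _
  apply Submodule.sum_mem
  intro j _
  rw [smul_mul_smul_comm, X_mul_X]
  apply Submodule.smul_mem
  rw [← MvPolynomial.single_eq_monomial]
  exact Finsupp.single_mem_supported ℂ 1 (hT i j)

lemma Phi_sym (hsym : ∀ x y, B x y = B y x) (a b : V) (m n : ℤ) :
    PhiL B ((2⁻¹ : ℂ) • (genU B a m * genU B b n + genU B b n * genU B a m)) =
      lmapH (Finsupp.single m a) * lmapH (Finsupp.single n b) := by
  rw [map_smul, map_add, PhiL_gen_mul, PhiL_gen_mul,
    mul_comm (lmapH (Finsupp.single n b)) (lmapH (Finsupp.single m a))]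
  have hc : (if m = -n then (n : ℂ) * B b a else 0) =
      -(if n = -m then (m : ℂ) * B a b else 0) := by
    rcases eq_or_ne n (-m) with rfl | hne
    · rw [if_pos (by omega), if_pos rfl, hsym b a]
      push_cast
      ring
    · rw [if_neg (by omega), if_neg hne, neg_zero]
  rw [hc]
  module

lemma kappa_zero (a b : V) (m n : ℤ) (hmn : m * n = 0) :
    (if n = -m then (m : ℂ) * B a b else 0) = 0 := by
  rcases eq_or_ne n (-m) with rfl | hne
  · rw [if_pos rfl]
    have hm : m = 0 := by rcases mul_eq_zero.mp hmn with h | h <;> omega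
    rw [hm]
    norm_num
  · rw [if_neg hne]

lemma genU_comm_of_mul_zero (hsym : ∀ x y, B x y = B y x) (a b : V) (m n : ℤ)
    (hmn : m * n = 0) : genU B a m * genU B b n = genU B b n * genU B a m := by
  rw [genU_mul_comm B hsym a b m n, kappa_zero B a b m n hmn, zero_smul, add_zero]

lemma Phi_LU (a b : V) (m n : ℤ) (hmn : m * n = 0) :
    PhiL B (LU B a b m n) =
      (2⁻¹ : ℂ) • (lmapH (Finsupp.single m a) * lmapH (Finsupp.single n b)) := by
  rw [LU, map_smul, no]
  split_ifs with h
  · rw [PhiL_gen_mul, kappa_zero B b a n m (by rw [mul_comm]; exact hmn), zero_div, zero_smul, add_zero,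
      mul_comm (lmapH (Finsupp.single n b)) (lmapH (Finsupp.single m a))]
  · rw [PhiL_gen_mul, kappa_zero B a b m n hmn, zero_div, zero_smul, add_zero]

lemma PsiPhi_Cinf (hsym : ∀ x y, B x y = B y x) :
    ∀ x ∈ spanCinf B, PsiU B (PhiL B x) = x := by
  intro x hx
  induction hx using Submodule.span_induction with
  | mem x hx =>
    obtain ⟨a, b, m, n, hm, hn, rfl⟩ := hx
    rw [Phi_sym B hsym, PsiU_LL]
  | zero => simp
  | add x y _ _ hx hy => rw [map_add, map_add, hx, hy]
  | smul t x _ hx => rw [map_smul, map_smul, hx]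

lemma PsiPhi_I (hsym : ∀ x y, B x y = B y x) :
    ∀ x ∈ spanI B, PsiU B (PhiL B x) = x := by
  intro x hx
  induction hx using Submodule.span_induction with
  | mem x hx =>
    obtain ⟨a, b, m, n, hmn, rfl⟩ := hx
    rw [Phi_LU B a b m n hmn, map_smul, PsiU_LL]
    have huv := genU_comm_of_mul_zero B hsym a b m n hmn
    rw [LU, no]
    rw [huv]
    split_ifs with h
    · module
    · module
  | zero => simp
  | add x y _ _ hx hy => rw [map_add, map_add, hx, hy]
  | smul t x _ hx => rw [map_smul, map_smul, hx]

/-- projection onto the coefficient of `ℏ`, times `c`. -/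
noncomputable def PsiC : MH V →ₗ[ℂ] UHeis B :=
  (MvPolynomial.lcoeff ℂ (Finsupp.single (none : σH V) 1)).smulRight (cenU B)

lemma PsiC_Xh : PsiC B (Xh V) = cenU B := by
  rw [PsiC, LinearMap.smulRight_apply, Xh, lcoeff_apply, MvPolynomial.X, coeff_monomial,
    if_pos rfl, one_smul]

lemma PsiPhi_cen : ∀ x ∈ (ℂ ∙ cenU B), PsiC B (PhiL B x) = x := by
  intro x hx
  obtain ⟨t, rfl⟩ := Submodule.mem_span_singleton.mp hx
  rw [map_smul, map_smul, PhiL_cenU, PsiC_Xh]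

lemma map_Cinf_le (hsym : ∀ x y, B x y = B y x) :
    (spanCinf B).map (PhiL B) ≤ AddMonoidAlgebra.supported ℂ ℂ (T1 V) := by
  rw [spanCinf, Submodule.map_span, Submodule.span_le]
  rintro _ ⟨x, ⟨a, b, m, n, hm, hn, rfl⟩, rfl⟩
  rw [SetLike.mem_coe, Phi_sym B hsym]
  exact LL_mem a b m n (T1 V) fun i j => ⟨(m, i), (n, j), hm, hn, rfl⟩

lemma map_I_le : (spanI B).map (PhiL B) ≤ AddMonoidAlgebra.supported ℂ ℂ (T2 V) := by
  rw [spanI, Submodule.map_span, Submodule.span_le]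
  rintro _ ⟨x, ⟨a, b, m, n, hmn, rfl⟩, rfl⟩
  rw [SetLike.mem_coe, Phi_LU B a b m n hmn]
  exact Submodule.smul_mem _ _ (LL_mem a b m n (T2 V) fun i j => ⟨(m, i), (n, j), hmn, rfl⟩)

lemma map_cen_le : (ℂ ∙ cenU B).map (PhiL B) ≤ AddMonoidAlgebra.supported ℂ ℂ (T3 V) := by
  rw [Submodule.map_span, Submodule.span_le]
  rintro _ ⟨x, hx, rfl⟩
  rw [Set.mem_singleton_iff.mp hx, SetLike.mem_coe, PhiL_cenU, Xh, MvPolynomial.X,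
    ← MvPolynomial.single_eq_monomial]
  exact Finsupp.single_mem_supported ℂ 1 rfl

end Aux5
/-- `𝓛` is the internal direct sum of the vector subspaces `C_∞`, `𝓘`
and `ℂc`. -/
theorem spanL_eq_direct_sum_Cinf_I_c
    [FiniteDimensional ℂ V] (hdim : 1 ≤ Module.finrank ℂ V)
    (hsym : ∀ x y, B x y = B y x)
    (hnd : ∀ x, (∀ y, B x y = 0) → x = 0) :
    spanL B = spanCinf B ⊔ spanI B ⊔ (ℂ ∙ cenU B) ∧
      iSupIndep ![spanCinf B, spanI B, ℂ ∙ cenU B] := by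
  classical
  have hex : ∃ a : V, B a a ≠ 0 := by
    by_contra hno
    push_neg at hno
    have hzero : ∀ x y : V, B x y = 0 := by
      intro x y
      have h1 : B x y + B y x = 0 := by
        have h0 := hno (x + y)
        simp only [map_add, LinearMap.add_apply, hno x, hno y] at h0
        linear_combination h0
      have h2 : (2 : ℂ) * B x y = 0 := by
        rw [hsym y x] at h1
        linear_combination h1
      rcases mul_eq_zero.mp h2 with h | h
      · exact absurd h (by norm_num)
      · exact h
    have hall : ∀ x : V, x = 0 := fun x => hnd x (hzero x)
    have hnt : Nontrivial V := Module.nontrivial_of_finrank_pos (R := ℂ) hdim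
    obtain ⟨x, y, hxy⟩ := hnt
    exact hxy ((hall x).trans (hall y).symm)
  obtain ⟨a0, ha0⟩ := hex
  constructor
  · apply le_antisymm
    · rw [spanL, Submodule.span_le]
      rintro _ ⟨a, b, m, n, rfl⟩
      rw [SetLike.mem_coe]
      by_cases hmn : m * n = 0
      · have huv := genU_comm_of_mul_zero B hsym a b m n hmn
        have hLU : genU B a m * genU B b n = (2 : ℂ) • LU B a b m n := by
          rw [LU, no]
          split_ifs with h
          · rw [← huv]
            module
          · module
        rw [hLU]
        refine Submodule.mem_sup_left (Submodule.mem_sup_right ?_)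
        exact Submodule.smul_mem _ _ (Submodule.subset_span ⟨a, b, m, n, hmn, rfl⟩)
      · have hm : m ≠ 0 := fun h => hmn (by rw [h, zero_mul])
        have hn : n ≠ 0 := fun h => hmn (by rw [h, mul_zero])
        have hkey : genU B a m * genU B b n =
            (2⁻¹ : ℂ) • (genU B a m * genU B b n + genU B b n * genU B a m) +
              ((2⁻¹ : ℂ) * (if n = -m then (m : ℂ) * B a b else 0)) • cenU B := by
          rw [genU_mul_comm B hsym a b m n]
          module
        rw [hkey]
        apply Submodule.add_mem
        · exact Submodule.mem_sup_left (Submodule.mem_sup_left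
            (Submodule.subset_span ⟨a, b, m, n, hm, hn, rfl⟩))
        · exact Submodule.mem_sup_right
            (Submodule.smul_mem _ _ (Submodule.mem_span_singleton_self _))
    · refine sup_le (sup_le ?_ ?_) ?_
      · rw [spanCinf, Submodule.span_le]
        rintro _ ⟨a, b, m, n, _, _, rfl⟩
        rw [SetLike.mem_coe]
        exact Submodule.smul_mem _ _ (Submodule.add_mem _
          (Submodule.subset_span ⟨a, b, m, n, rfl⟩)
          (Submodule.subset_span ⟨b, a, n, m, rfl⟩))
      · rw [spanI, Submodule.span_le]
        rintro _ ⟨a, b, m, n, hmn, rfl⟩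
        rw [SetLike.mem_coe, LU, no]
        split_ifs
        · exact Submodule.smul_mem _ _ (Submodule.subset_span ⟨b, a, n, m, rfl⟩)
        · exact Submodule.smul_mem _ _ (Submodule.subset_span ⟨a, b, m, n, rfl⟩)
      · rw [Submodule.span_singleton_le_iff_mem]
        have hc := genU_mul_comm B hsym a0 a0 1 (-1)
        rw [if_pos rfl] at hc
        push_cast at hc
        rw [one_mul] at hc
        have hcen : cenU B = (B a0 a0)⁻¹ •
            (genU B a0 1 * genU B a0 (-1) - genU B a0 (-1) * genU B a0 1) := by
          rw [hc, add_sub_cancel_left, smul_smul, inv_mul_cancel₀ ha0, one_smul]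
        rw [hcen]
        exact Submodule.smul_mem _ _ (Submodule.sub_mem _
          (Submodule.subset_span ⟨a0, a0, 1, -1, rfl⟩)
          (Submodule.subset_span ⟨a0, a0, -1, 1, rfl⟩))
  · have d1 : Disjoint (spanCinf B) (spanI B ⊔ (ℂ ∙ cenU B)) := by
      refine HeisAux.disjoint_of_sep (PhiL B) (PsiU B) _ _
        (AddMonoidAlgebra.supported ℂ ℂ (T1 V)) (AddMonoidAlgebra.supported ℂ ℂ (T2 V ∪ T3 V))
        (map_Cinf_le B hsym) ?_
        (HeisAux.disjoint_supported_supported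
          (Set.disjoint_union_right.mpr ⟨disjT12, disjT13⟩))
        (PsiPhi_Cinf B hsym)
      rw [Submodule.map_sup, HeisAux.supported_union]
      exact sup_le_sup (map_I_le B) (map_cen_le B)
    have d2 : Disjoint (spanI B) (spanCinf B ⊔ (ℂ ∙ cenU B)) := by
      refine HeisAux.disjoint_of_sep (PhiL B) (PsiU B) _ _
        (AddMonoidAlgebra.supported ℂ ℂ (T2 V)) (AddMonoidAlgebra.supported ℂ ℂ (T1 V ∪ T3 V))
        (map_I_le B) ?_
        (HeisAux.disjoint_supported_supported
          (Set.disjoint_union_right.mpr ⟨disjT12.symm, disjT23⟩))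
        (PsiPhi_I B hsym)
      rw [Submodule.map_sup, HeisAux.supported_union]
      exact sup_le_sup (map_Cinf_le B hsym) (map_cen_le B)
    have d3 : Disjoint (ℂ ∙ cenU B) (spanCinf B ⊔ spanI B) := by
      refine HeisAux.disjoint_of_sep (PhiL B) (PsiC B) _ _
        (AddMonoidAlgebra.supported ℂ ℂ (T3 V)) (AddMonoidAlgebra.supported ℂ ℂ (T1 V ∪ T2 V))
        (map_cen_le B) ?_
        (HeisAux.disjoint_supported_supported
          (Set.disjoint_union_right.mpr ⟨disjT13.symm, disjT23.symm⟩))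
        (PsiPhi_cen B)
      rw [Submodule.map_sup, HeisAux.supported_union]
      exact sup_le_sup (map_Cinf_le B hsym) (map_I_le B)
    intro i
    fin_cases i
    · refine Disjoint.mono_right ?_ d1
      apply iSup_le; intro j; apply iSup_le; intro hj
      fin_cases j
      · simp at hj
      · exact le_sup_left
      · exact le_sup_right
    · refine Disjoint.mono_right ?_ d2
      apply iSup_le; intro j; apply iSup_le; intro hj
      fin_cases j
      · exact le_sup_left
      · simp at hj
      · exact le_sup_right
    · refine Disjoint.mono_right ?_ d3
      apply iSup_le; intro j; apply iSup_le; intro hj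
      fin_cases j
      · exact le_sup_left
      · exact le_sup_right
      · simp at hj
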